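/- For each m ∈ {1, …, N} the function k_m(x) = (1 − θ(x))/(x − t_m) = 2i/((S(x) + i)(x − t_m)), defined for almost every real x, belongs to L²(ℝ), and for m ≠ n the functions k_m and k_n are orthogonal in L²(ℝ): ∫_ℝ k_m(x)·conj(k_n(x)) dx = 0. -/

import Mathlib

open MeasureTheory Complex Finset

noncomputable section

namespace ClarkAux

/-! ### Generic helper lemmas -/

lemma exists_bound {f : ℝ → ℝ} (hf : Continuous f) (R B : ℝ) (hB : ∀ x, R ≤ |x| → f x ≤ B) :
    ∃ K, ∀ x, f x ≤ K := by
  obtain ⟨K₁, hK₁⟩ := (isCompact_Icc (a := -R) (b := R)).exists_bound_of_continuousOn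
    hf.continuousOn
  refine ⟨max B K₁, fun x => ?_⟩
  rcases le_or_gt R |x| with h | h
  · exact le_trans (hB x h) (le_max_left _ _)
  · have hx : x ∈ Set.Icc (-R) R := by
      rw [Set.mem_Icc]
      obtain ⟨h1, h2⟩ := abs_lt.mp h
      constructor <;> linarith
    have h2 := hK₁ x hx
    rw [Real.norm_eq_abs] at h2
    exact le_trans (le_trans (le_abs_self _) h2) (le_max_right _ _)

lemma integrable_of_bound {E : Type*} [NormedAddCommGroup E] (f : ℝ → E) (hf : Continuous f)
    (R B : ℝ) (hB : ∀ x : ℝ, R ≤ |x| → ‖f x‖ * (1 + x^2) ≤ B) :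
    Integrable f (volume : Measure ℝ) := by
  obtain ⟨K, hK⟩ := exists_bound (f := fun x => ‖f x‖ * (1 + x^2))
    (hf.norm.mul (by continuity)) R B hB
  refine (integrable_inv_one_add_sq.const_mul K).mono' hf.aestronglyMeasurable ?_
  refine Filter.Eventually.of_forall (fun x => ?_)
  have h1 : (0:ℝ) < 1 + x^2 := by positivity
  rw [show K * (1+x^2)⁻¹ = K/(1+x^2) from (div_eq_mul_inv K _).symm, le_div_iff₀ h1]
  exact hK x

lemma memLp_of_bound (f : ℝ → ℂ) (hf : Continuous f) (R B : ℝ)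
    (hB : ∀ x : ℝ, R ≤ |x| → ‖f x‖^2 * (1 + x^2) ≤ B) : MemLp f 2 (volume : Measure ℝ) := by
  rw [memLp_two_iff_integrable_sq_norm hf.aestronglyMeasurable]
  refine integrable_of_bound _ (by continuity) R B (fun x hx => ?_)
  have h := hB x hx
  have he : ‖‖f x‖^2‖ = ‖f x‖^2 := by
    rw [Real.norm_eq_abs, _root_.abs_of_nonneg (by positivity)]
  rw [he]
  exact h

lemma div_bound1 (N : ℕ) (r : ℝ) (hN : 1 ≤ N) (hr : 1 ≤ r) (a b : ℝ) (ha0 : 0 ≤ a)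
    (ha : a ≤ (2*r)^(N-1)) (hb : r^N/2^(N+1) ≤ b) : 2*a/b ≤ 2^(2*N+1)/r := by
  have hr0 : (0:ℝ) < r := by linarith
  have hd : (0:ℝ) < r^N/2^(N+1) := by positivity
  have hb0 : (0:ℝ) < b := lt_of_lt_of_le hd hb
  have hrpow : r^N = r^(N-1)*r := by rw [← pow_succ]; congr 1; omega
  have epow : (2:ℝ)^(2*N+1) = 2*(2^(N-1)*2^(N+1)) := by
    rw [← pow_add, ← pow_succ']; congr 1; omega
  rw [div_le_div_iff₀ hb0 hr0]
  have e : 2*(2*r)^(N-1)*r = 2^(2*N+1) * (r^N/2^(N+1)) := by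
    rw [mul_pow, hrpow, epow]; field_simp
  calc 2*a*r ≤ 2*(2*r)^(N-1)*r := by
        have h2r : (0:ℝ) ≤ (2*r)^(N-1) := by positivity
        nlinarith
    _ = 2^(2*N+1) * (r^N/2^(N+1)) := e
    _ ≤ 2^(2*N+1) * b := mul_le_mul_of_nonneg_left hb (by positivity)

lemma div_bound2 (N : ℕ) (r : ℝ) (hN : 2 ≤ N) (hr : 1 ≤ r) (a b : ℝ) (ha0 : 0 ≤ a)
    (ha : a ≤ (2*r)^(N-2)) (hb : r^N/2^(N+1) ≤ b) : 2*a/b ≤ 2^(2*N+1)/r^2 := by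
  have hr0 : (0:ℝ) < r := by linarith
  have hd : (0:ℝ) < r^N/2^(N+1) := by positivity
  have hb0 : (0:ℝ) < b := lt_of_lt_of_le hd hb
  have hrpow : r^N = r^(N-2)*r^2 := by rw [← pow_add]; congr 1; omega
  have epow : (2:ℝ)^(2*N) = 2*(2^(N-2)*2^(N+1)) := by
    rw [← pow_add, ← pow_succ']; congr 1; omega
  rw [div_le_div_iff₀ hb0 (by positivity : (0:ℝ) < r^2)]
  have e : 2*(2*r)^(N-2)*r^2 = 2^(2*N) * (r^N/2^(N+1)) := by
    rw [mul_pow, hrpow, epow]; field_simp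
  have epow2 : (2:ℝ)^(2*N) ≤ 2^(2*N+1) := by
    apply pow_le_pow_right₀ (by norm_num)
    omega
  calc 2*a*r^2 ≤ 2*(2*r)^(N-2)*r^2 := by
        have h2r : (0:ℝ) ≤ (2*r)^(N-2) := by positivity
        nlinarith
    _ = 2^(2*N) * (r^N/2^(N+1)) := e
    _ ≤ 2^(2*N+1) * b := mul_le_mul epow2 hb (le_of_lt hd) (by positivity)

/-! ### The rational functions -/

variable (N : ℕ) (t : ℕ → ℝ) (μ : ℕ → ℝ)

def QQ (z : ℂ) : ℂ := ∏ j ∈ Finset.range N, ((t j : ℂ) - z)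
def PP (z : ℂ) : ℂ := ∑ n ∈ Finset.range N, (μ n : ℂ) * ∏ j ∈ (Finset.range N).erase n, ((t j : ℂ) - z)
def DD (z : ℂ) : ℂ := PP N t μ z + Complex.I * QQ N t z
def QE (m : ℕ) (z : ℂ) : ℂ := ∏ j ∈ (Finset.range N).erase m, ((t j : ℂ) - z)
def QE2 (m n : ℕ) (z : ℂ) : ℂ := ∏ j ∈ ((Finset.range N).erase m).erase n, ((t j : ℂ) - z)
def Rbd : ℝ := 2*(∑ j ∈ Finset.range N, |t j|) + (∑ n ∈ Finset.range N, |μ n|)*4^N + 1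

lemma diff_QQ : Differentiable ℂ (QQ N t) :=
  Differentiable.fun_finset_prod (fun j _ => (differentiable_const _).sub differentiable_id)

lemma diff_QE (m : ℕ) : Differentiable ℂ (QE N t m) :=
  Differentiable.fun_finset_prod (fun j _ => (differentiable_const _).sub differentiable_id)

lemma diff_QE2 (m n : ℕ) : Differentiable ℂ (QE2 N t m n) :=
  Differentiable.fun_finset_prod (fun j _ => (differentiable_const _).sub differentiable_id)

lemma diff_PP : Differentiable ℂ (PP N t μ) :=
  Differentiable.fun_sum (fun n _ => (differentiable_const _).mul
    (Differentiable.fun_finset_prod (fun j _ => (differentiable_const _).sub differentiable_id)))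

lemma diff_DD : Differentiable ℂ (DD N t μ) :=
  (diff_PP N t μ).add ((differentiable_const _).mul (diff_QQ N t))

lemma QQ_eq (m : ℕ) (hm : m ∈ Finset.range N) (z : ℂ) :
    QQ N t z = ((t m : ℂ) - z) * QE N t m z := (Finset.mul_prod_erase _ _ hm).symm

lemma QE_eq (m n : ℕ) (hn : n ∈ (Finset.range N).erase m) (z : ℂ) :
    QE N t m z = ((t n : ℂ) - z) * QE2 N t m n z := (Finset.mul_prod_erase _ _ hn).symm

lemma QE_mul_QE (m n : ℕ) (hm : m ∈ Finset.range N) (hn : n ∈ Finset.range N) (hmn : m ≠ n) (z : ℂ) :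
    QE N t m z * QE N t n z = QQ N t z * QE2 N t m n z := by
  have hn' : n ∈ (Finset.range N).erase m := Finset.mem_erase.mpr ⟨hmn.symm, hn⟩
  have hm' : m ∈ (Finset.range N).erase n := Finset.mem_erase.mpr ⟨hmn, hm⟩
  rw [QE_eq N t m n hn' z, QQ_eq N t m hm z, QE_eq N t m n hn' z]
  have h2 : QE N t n z = ((t m : ℂ) - z) * ∏ j ∈ ((Finset.range N).erase n).erase m, ((t j : ℂ) - z) :=
    (Finset.mul_prod_erase _ _ hm').symm
  rw [h2, Finset.erase_right_comm]
  show _ * (_ * QE2 N t m n z) = _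
  ring

lemma im_PQ (z : ℂ) : (PP N t μ z * (starRingEnd ℂ) (QQ N t z)).im
    = (∑ n ∈ Finset.range N, μ n * Complex.normSq (QE N t n z)) * z.im := by
  have key : PP N t μ z * (starRingEnd ℂ) (QQ N t z)
      = ∑ n ∈ Finset.range N, ((μ n : ℂ) * Complex.normSq (QE N t n z)) * (starRingEnd ℂ) ((t n : ℂ) - z) := by
    unfold PP
    rw [Finset.sum_mul]
    refine Finset.sum_congr rfl (fun n hn => ?_)
    have hprod : ∏ x ∈ (Finset.range N).erase n, ((t x : ℂ) - z) = QE N t n z := rfl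
    rw [hprod, QQ_eq N t n hn z, map_mul]
    have h1 := Complex.mul_conj (QE N t n z)
    linear_combination ((μ n : ℂ) * (starRingEnd ℂ) ((t n : ℂ) - z)) * h1
  rw [key, Complex.im_sum, Finset.sum_mul]
  refine Finset.sum_congr rfl (fun n hn => ?_)
  simp [Complex.mul_im, Complex.conj_im, Complex.conj_re, Complex.sub_im, Complex.sub_re]

variable {N t μ} (ht : ∀ i j, i < j → j < N → t i < t j) (hμ : ∀ n < N, 0 < μ n)

include ht in
lemma t_inj : ∀ i ∈ Finset.range N, ∀ l ∈ Finset.range N, t i = t l → i = l := by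
  intro i hi l hl h
  rcases lt_trichotomy i l with h1 | h1 | h1
  · exact absurd h (ne_of_lt (ht i l h1 (mem_range.mp hl)))
  · exact h1
  · exact absurd h.symm (ne_of_lt (ht l i h1 (mem_range.mp hi)))

include ht hμ in
lemma PP_at (j : ℕ) (hj : j ∈ Finset.range N) : PP N t μ ((t j : ℂ)) ≠ 0 := by
  unfold PP
  rw [Finset.sum_eq_single j]
  · apply mul_ne_zero
    · exact_mod_cast (hμ j (mem_range.mp hj)).ne'
    · rw [Finset.prod_ne_zero_iff]
      intro k hk
      have hne : t k ≠ t j := fun h =>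
        (Finset.mem_erase.mp hk).1 (t_inj ht k (Finset.mem_erase.mp hk).2 j hj h)
      intro h
      rw [sub_eq_zero] at h
      exact hne (by exact_mod_cast h)
  · intro n hn hnj
    apply mul_eq_zero_of_right
    exact Finset.prod_eq_zero (Finset.mem_erase.mpr ⟨hnj.symm, hj⟩) (sub_self _)
  · intro h; exact absurd hj h

include ht hμ in
lemma DD_ne (z : ℂ) (hz : 0 ≤ z.im) : DD N t μ z ≠ 0 := by
  intro h
  have hPQ : PP N t μ z = -Complex.I * QQ N t z := by unfold DD at h; linear_combination h
  have h1 : (PP N t μ z * (starRingEnd ℂ) (QQ N t z)).im = - Complex.normSq (QQ N t z) := by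
    rw [hPQ, mul_assoc, Complex.mul_conj]
    simp
  have h2 := im_PQ N t μ z
  have hsum : 0 ≤ ∑ n ∈ Finset.range N, μ n * Complex.normSq (QE N t n z) :=
    Finset.sum_nonneg fun n hn => mul_nonneg (hμ n (mem_range.mp hn)).le (Complex.normSq_nonneg _)
  have h3 : Complex.normSq (QQ N t z) ≤ 0 := by nlinarith [mul_nonneg hsum hz]
  have hQ0 : QQ N t z = 0 := Complex.normSq_eq_zero.mp (le_antisymm h3 (Complex.normSq_nonneg _))
  obtain ⟨j, hj, hfac⟩ := Finset.prod_eq_zero_iff.mp hQ0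
  have hzj : z = (t j : ℂ) := by rw [sub_eq_zero] at hfac; exact hfac.symm
  have hP0 : PP N t μ z = 0 := by rw [hPQ, hQ0, mul_zero]
  rw [hzj] at hP0
  exact PP_at ht hμ j hj hP0

include ht hμ in
lemma DD_ne_real (x : ℝ) : DD N t μ (x : ℂ) ≠ 0 :=
  DD_ne ht hμ _ (by simp)

/-! ### Conjugation identities -/

lemma conj_prod (s : Finset ℕ) (x : ℝ) :
    (starRingEnd ℂ) (∏ j ∈ s, ((t j : ℂ) - (x : ℂ))) = ∏ j ∈ s, ((t j : ℂ) - (x : ℂ)) := by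
  rw [map_prod]
  refine Finset.prod_congr rfl (fun j _ => ?_)
  rw [show ((t j : ℂ) - (x : ℂ)) = ((t j - x : ℝ) : ℂ) by push_cast; ring, Complex.conj_ofReal]

lemma conj_QE (m : ℕ) (x : ℝ) : (starRingEnd ℂ) (QE N t m (x:ℂ)) = QE N t m (x:ℂ) :=
  conj_prod _ x

lemma conj_QE2 (m n : ℕ) (x : ℝ) : (starRingEnd ℂ) (QE2 N t m n (x:ℂ)) = QE2 N t m n (x:ℂ) :=
  conj_prod _ x

lemma conj_QQ (x : ℝ) : (starRingEnd ℂ) (QQ N t (x:ℂ)) = QQ N t (x:ℂ) := conj_prod _ x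

lemma conj_PP (x : ℝ) : (starRingEnd ℂ) (PP N t μ (x:ℂ)) = PP N t μ (x:ℂ) := by
  unfold PP; rw [map_sum]
  refine Finset.sum_congr rfl (fun n _ => ?_)
  rw [map_mul, Complex.conj_ofReal, conj_prod _ x]

lemma conj_DD (x : ℝ) :
    (starRingEnd ℂ) (DD N t μ (x:ℂ)) = PP N t μ (x:ℂ) - Complex.I * QQ N t (x:ℂ) := by
  unfold DD; rw [map_add, map_mul, conj_PP, conj_QQ, Complex.conj_I]; ring

/-! ### Pointwise formulas -/

lemma k_formula (s : ℝ) (m : ℕ) (hm : m ∈ Finset.range N) (x : ℝ)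
    (hx : ∀ j ∈ Finset.range N, (t j : ℂ) ≠ (x:ℂ))
    (hs : (s : ℂ) * QQ N t (x:ℂ) = PP N t μ (x:ℂ)) :
    (1 - ((s:ℂ) - Complex.I)/((s:ℂ) + Complex.I)) / ((x:ℂ) - (t m : ℂ))
      = -2*Complex.I * QE N t m (x:ℂ) / DD N t μ (x:ℂ) := by
  have hsi : (s:ℂ) + Complex.I ≠ 0 := by
    intro h; have := congrArg Complex.im h; simp at this
  have hmx : ((t m : ℂ) - (x:ℂ)) ≠ 0 := sub_ne_zero.mpr (hx m hm)
  have hxm : ((x:ℂ) - (t m:ℂ)) ≠ 0 := fun h => hmx (by linear_combination -h)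
  have hQE : QE N t m (x:ℂ) ≠ 0 := by
    rw [QE, Finset.prod_ne_zero_iff]
    exact fun j hj => sub_ne_zero.mpr (hx j (Finset.mem_erase.mp hj).2)
  have hDD : DD N t μ (x:ℂ) = ((s:ℂ) + Complex.I) * QQ N t (x:ℂ) := by
    unfold DD; rw [← hs]; ring
  rw [hDD, QQ_eq N t m hm]
  field_simp
  ring

lemma kk_formula (m n : ℕ) (hm : m ∈ Finset.range N) (hn : n ∈ Finset.range N) (hmn : m ≠ n)
    (x : ℝ) (hD : DD N t μ (x:ℂ) ≠ 0) :
    (-2*Complex.I * QE N t m (x:ℂ) / DD N t μ (x:ℂ)) *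
      (starRingEnd ℂ) (-2*Complex.I * QE N t n (x:ℂ) / DD N t μ (x:ℂ))
    = (2*Complex.I * QE2 N t m n (x:ℂ) / DD N t μ (x:ℂ))
      + (starRingEnd ℂ) (2*Complex.I * QE2 N t m n (x:ℂ) / DD N t μ (x:ℂ)) := by
  have hDc : PP N t μ (x:ℂ) - Complex.I * QQ N t (x:ℂ) ≠ 0 := by
    rw [← conj_DD]; simpa using hD
  have hQmn := QE_mul_QE N t m n hm hn hmn (x:ℂ)
  have c2' : (starRingEnd ℂ) (2 : ℂ) = 2 := Complex.conj_ofNat 2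
  have c2 : (starRingEnd ℂ) (-2 : ℂ) = -2 := by rw [map_neg, c2']
  rw [map_div₀, map_div₀, map_mul, map_mul, map_mul, map_mul, conj_QE, conj_QE2, conj_DD]
  rw [Complex.conj_I, c2, c2']
  rw [div_mul_div_comm, div_add_div _ _ hD hDc]
  congr 1
  show _ = _ * (PP N t μ (x:ℂ) - Complex.I * QQ N t (x:ℂ)) + DD N t μ (x:ℂ) * _
  unfold DD
  linear_combination (-4*Complex.I^2 : ℂ) * hQmn

lemma S_mul_QQ (x : ℝ) (hx : ∀ j ∈ Finset.range N, (t j : ℂ) ≠ (x : ℂ)) :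
    ((∑ n ∈ Finset.range N, μ n / (t n - x) : ℝ) : ℂ) * QQ N t (x:ℂ) = PP N t μ (x:ℂ) := by
  push_cast
  rw [Finset.sum_mul]
  unfold PP
  refine Finset.sum_congr rfl (fun n hn => ?_)
  rw [QQ_eq N t n hn]
  have hne : ((t n : ℂ) - (x:ℂ)) ≠ 0 := sub_ne_zero.mpr (hx n hn)
  have hprod : ∏ j ∈ (Finset.range N).erase n, ((t j : ℂ) - (x:ℂ)) = QE N t n (x:ℂ) := rfl
  rw [hprod]
  field_simp

/-! ### Norm bounds -/

lemma Rbd_pos : 1 ≤ Rbd N t μ := by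
  have h1 : 0 ≤ ∑ j ∈ Finset.range N, |t j| := Finset.sum_nonneg fun j _ => abs_nonneg _
  have h2 : 0 ≤ ∑ n ∈ Finset.range N, |μ n| := Finset.sum_nonneg fun n _ => abs_nonneg _
  have h3 : (0:ℝ) ≤ 4^N := by positivity
  unfold Rbd; nlinarith

lemma abs_t_le (j : ℕ) (hj : j ∈ Finset.range N) : |t j| ≤ ∑ i ∈ Finset.range N, |t i| :=
  Finset.single_le_sum (f := fun i => |t i|) (fun i _ => abs_nonneg _) hj

lemma norm_factor_le (j : ℕ) (hj : j ∈ Finset.range N) (z : ℂ) (hz : Rbd N t μ ≤ ‖z‖) :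
    ‖(t j : ℂ) - z‖ ≤ 2 * ‖z‖ := by
  have h1 := abs_t_le (t := t) j hj
  have h2 : 0 ≤ (∑ n ∈ Finset.range N, |μ n|)*4^N := by positivity
  have hT : ∑ i ∈ Finset.range N, |t i| ≤ ‖z‖ := by
    unfold Rbd at hz
    have h0 : 0 ≤ ∑ i ∈ Finset.range N, |t i| := Finset.sum_nonneg fun i _ => abs_nonneg _
    linarith
  calc ‖(t j : ℂ) - z‖ ≤ ‖((t j : ℝ) : ℂ)‖ + ‖z‖ := norm_sub_le _ _
    _ ≤ ‖z‖ + ‖z‖ := by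
        rw [Complex.norm_real, Real.norm_eq_abs]
        linarith
    _ = 2 * ‖z‖ := by ring

lemma norm_factor_ge (j : ℕ) (hj : j ∈ Finset.range N) (z : ℂ) (hz : Rbd N t μ ≤ ‖z‖) :
    ‖z‖ / 2 ≤ ‖(t j : ℂ) - z‖ := by
  have h1 := abs_t_le (t := t) j hj
  have h2 : 0 ≤ (∑ n ∈ Finset.range N, |μ n|)*4^N := by positivity
  unfold Rbd at hz
  have key : ‖z‖ - ‖((t j : ℝ):ℂ)‖ ≤ ‖(t j : ℂ) - z‖ := by
    rw [norm_sub_rev]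
    exact norm_sub_norm_le _ _
  rw [Complex.norm_real, Real.norm_eq_abs] at key
  linarith

lemma norm_prod_le (s : Finset ℕ) (hs : s ⊆ Finset.range N) (z : ℂ) (hz : Rbd N t μ ≤ ‖z‖) :
    ‖∏ j ∈ s, ((t j : ℂ) - z)‖ ≤ (2*‖z‖)^s.card := by
  rw [norm_prod]
  calc ∏ j ∈ s, ‖(t j : ℂ) - z‖ ≤ ∏ j ∈ s, (2*‖z‖) :=
      Finset.prod_le_prod (fun j _ => norm_nonneg _)
        (fun j hj => norm_factor_le (N := N) j (hs hj) z hz)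
    _ = (2*‖z‖)^s.card := by rw [Finset.prod_const]

lemma norm_QQ_ge (z : ℂ) (hz : Rbd N t μ ≤ ‖z‖) :
    (‖z‖/2)^N ≤ ‖QQ N t z‖ := by
  unfold QQ
  rw [norm_prod]
  calc (‖z‖/2)^N = ∏ _j ∈ Finset.range N, (‖z‖/2) := by
        rw [Finset.prod_const, Finset.card_range]
    _ ≤ ∏ j ∈ Finset.range N, ‖(t j : ℂ) - z‖ :=
      Finset.prod_le_prod (fun j _ => by positivity)
        (fun j hj => norm_factor_ge (μ := μ) j hj z hz)

lemma norm_PP_le (z : ℂ) (hz : Rbd N t μ ≤ ‖z‖) :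
    ‖PP N t μ z‖ ≤ (∑ n ∈ Finset.range N, |μ n|) * (2*‖z‖)^(N-1) := by
  unfold PP
  calc ‖∑ n ∈ Finset.range N, (μ n : ℂ) * ∏ j ∈ (Finset.range N).erase n, ((t j : ℂ) - z)‖
      ≤ ∑ n ∈ Finset.range N, ‖(μ n : ℂ) * ∏ j ∈ (Finset.range N).erase n, ((t j : ℂ) - z)‖ :=
        norm_sum_le _ _
    _ ≤ ∑ n ∈ Finset.range N, |μ n| * (2*‖z‖)^(N-1) := by
        refine Finset.sum_le_sum (fun n hn => ?_)
        rw [norm_mul, Complex.norm_real, Real.norm_eq_abs]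
        refine mul_le_mul_of_nonneg_left ?_ (abs_nonneg _)
        have h := norm_prod_le (μ := μ) ((Finset.range N).erase n) (Finset.erase_subset _ _) z hz
        rwa [Finset.card_erase_of_mem hn, Finset.card_range] at h
    _ = (∑ n ∈ Finset.range N, |μ n|) * (2*‖z‖)^(N-1) := by rw [Finset.sum_mul]

lemma norm_DD_ge (hN : 1 ≤ N) (z : ℂ) (hz : Rbd N t μ ≤ ‖z‖) :
    ‖z‖^N / 2^(N+1) ≤ ‖DD N t μ z‖ := by
  have hzpos : (1:ℝ) ≤ ‖z‖ := le_trans (Rbd_pos (N := N) (t := t) (μ := μ)) hz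
  have key : ‖QQ N t z‖ - ‖PP N t μ z‖ ≤ ‖DD N t μ z‖ := by
    unfold DD
    calc ‖QQ N t z‖ - ‖PP N t μ z‖ = ‖Complex.I * QQ N t z‖ - ‖PP N t μ z‖ := by
          rw [norm_mul, Complex.norm_I, one_mul]
      _ ≤ ‖PP N t μ z + Complex.I * QQ N t z‖ := by
          have h := norm_sub_norm_le (Complex.I * QQ N t z) (-(PP N t μ z))
          rw [norm_neg, sub_neg_eq_add] at h
          have h2 : ‖Complex.I * QQ N t z + PP N t μ z‖ = ‖PP N t μ z + Complex.I * QQ N t z‖ := by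
            rw [add_comm]
          linarith
  have h1 := norm_QQ_ge (μ := μ) z hz
  have h2 := norm_PP_le (N := N) (t := t) (μ := μ) z hz
  set r := ‖z‖ with hr
  set M := ∑ n ∈ Finset.range N, |μ n| with hM
  have hMr : M * 4^N ≤ r := by
    have h0 : 0 ≤ ∑ i ∈ Finset.range N, |t i| := Finset.sum_nonneg fun i _ => abs_nonneg _
    unfold Rbd at hz; linarith
  have hNsub : N - 1 + 1 = N := Nat.succ_pred_eq_of_pos hN
  have hM0 : 0 ≤ M := Finset.sum_nonneg fun n _ => abs_nonneg _
  have hhalf : M * (2*r)^(N-1) ≤ r^N / 2^(N+1) := by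
    have hrpow : r^N = r^(N-1) * r := by rw [← pow_succ, hNsub]
    rw [mul_pow, hrpow]
    rw [div_eq_mul_inv]
    have h4 : (4:ℝ)^N = 2^(N-1) * 2^(N+1) := by
      rw [← pow_add, show N - 1 + (N+1) = 2*N by omega, pow_mul]; norm_num
    have hr1 : (0:ℝ) < r := by linarith
    have hrp : (0:ℝ) ≤ r^(N-1) := by positivity
    have key2 : M * 2^(N-1) * 2^(N+1) ≤ r := by rw [mul_assoc, ← h4]; exact hMr
    have h2p : (0:ℝ) < 2^(N+1) := by positivity
    rw [show M * (2^(N-1) * r^(N-1)) = (M * 2^(N-1)) * r^(N-1) by ring]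
    rw [show r^(N-1) * r * (2^(N+1))⁻¹ = (r * (2^(N+1))⁻¹) * r^(N-1) by ring]
    refine mul_le_mul_of_nonneg_right ?_ hrp
    rw [← div_eq_mul_inv, le_div_iff₀ h2p]
    exact key2
  have hpowN : (r/2)^N = r^N / 2^N := div_pow r 2 N
  have h2N : (0:ℝ) < 2^N := by positivity
  have hsplit : r^N/2^N - r^N/2^(N+1) = r^N/2^(N+1) := by
    rw [pow_succ]; field_simp; ring
  calc r^N / 2^(N+1) = r^N/2^N - r^N/2^(N+1) := hsplit.symm
    _ ≤ ‖QQ N t z‖ - ‖PP N t μ z‖ := by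
        rw [← hpowN]
        linarith
    _ ≤ ‖DD N t μ z‖ := key

lemma norm_h_le (hN : 1 ≤ N) (m : ℕ) (hm : m ∈ Finset.range N) (z : ℂ)
    (hz : Rbd N t μ ≤ ‖z‖) :
    ‖-2*Complex.I * QE N t m z / DD N t μ z‖ ≤ 2^(2*N+1)/‖z‖ := by
  have hr : (1:ℝ) ≤ ‖z‖ := le_trans (Rbd_pos (N := N) (t := t) (μ := μ)) hz
  have hQEn : ‖QE N t m z‖ ≤ (2*‖z‖)^(N-1) := by
    have h := norm_prod_le (μ := μ) ((Finset.range N).erase m) (Finset.erase_subset _ _) z hz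
    rwa [Finset.card_erase_of_mem hm, Finset.card_range] at h
  have hDDn := norm_DD_ge (t := t) (μ := μ) hN z hz
  have hEq : ‖-2*Complex.I * QE N t m z / DD N t μ z‖ = 2*‖QE N t m z‖/‖DD N t μ z‖ := by
    rw [norm_div, norm_mul, norm_mul]
    norm_num [Complex.norm_I]
  rw [hEq]
  exact div_bound1 N ‖z‖ hN hr _ _ (norm_nonneg _) hQEn hDDn

lemma norm_G_le (hN : 2 ≤ N) (m n : ℕ) (hm : m ∈ Finset.range N) (hn : n ∈ Finset.range N)
    (hmn : m ≠ n) (z : ℂ) (hz : Rbd N t μ ≤ ‖z‖) :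
    ‖2*Complex.I * QE2 N t m n z / DD N t μ z‖ ≤ 2^(2*N+1)/‖z‖^2 := by
  have hr : (1:ℝ) ≤ ‖z‖ := le_trans (Rbd_pos (N := N) (t := t) (μ := μ)) hz
  have hn' : n ∈ (Finset.range N).erase m := Finset.mem_erase.mpr ⟨hmn.symm, hn⟩
  have hQEn : ‖QE2 N t m n z‖ ≤ (2*‖z‖)^(N-2) := by
    have h := norm_prod_le (μ := μ) (((Finset.range N).erase m).erase n)
      (subset_trans (Finset.erase_subset _ _) (Finset.erase_subset _ _)) z hz
    rwa [Finset.card_erase_of_mem hn', Finset.card_erase_of_mem hm, Finset.card_range,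
      show N - 1 - 1 = N - 2 by omega] at h
  have hDDn := norm_DD_ge (t := t) (μ := μ) (by omega) z hz
  have hEq : ‖2*Complex.I * QE2 N t m n z / DD N t μ z‖ = 2*‖QE2 N t m n z‖/‖DD N t μ z‖ := by
    rw [norm_div, norm_mul, norm_mul]
    norm_num [Complex.norm_I]
  rw [hEq]
  exact div_bound2 N ‖z‖ hN hr _ _ (norm_nonneg _) hQEn hDDn

/-! ### Integrability and the contour argument -/

include ht hμ in
lemma cont_G (m n : ℕ) : Continuous (fun x : ℝ => 2*Complex.I * QE2 N t m n (x:ℂ) / DD N t μ (x:ℂ)) := by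
  apply Continuous.div
  · exact continuous_const.mul ((diff_QE2 N t m n).continuous.comp Complex.continuous_ofReal)
  · exact (diff_DD N t μ).continuous.comp Complex.continuous_ofReal
  · exact fun x => DD_ne_real ht hμ x

include ht hμ in
lemma cont_h (m : ℕ) :
    Continuous (fun x : ℝ => -2*Complex.I * QE N t m (x:ℂ) / DD N t μ (x:ℂ)) := by
  apply Continuous.div
  · exact continuous_const.mul ((diff_QE N t m).continuous.comp Complex.continuous_ofReal)
  · exact (diff_DD N t μ).continuous.comp Complex.continuous_ofReal
  · exact fun x => DD_ne_real ht hμ x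

include ht hμ in
lemma integrable_G (hN : 2 ≤ N) (m n : ℕ) (hm : m ∈ Finset.range N) (hn : n ∈ Finset.range N)
    (hmn : m ≠ n) :
    Integrable (fun x : ℝ => 2*Complex.I * QE2 N t m n (x:ℂ) / DD N t μ (x:ℂ))
      (volume : Measure ℝ) := by
  refine integrable_of_bound _ (cont_G ht hμ m n) (Rbd N t μ) (2*2^(2*N+1)) (fun x hx => ?_)
  have hz : Rbd N t μ ≤ ‖(x:ℂ)‖ := by rwa [Complex.norm_real, Real.norm_eq_abs]
  have hb := norm_G_le (t := t) (μ := μ) hN m n hm hn hmn (x:ℂ) hz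
  have hx1 : (1:ℝ) ≤ |x| := le_trans (Rbd_pos (N := N) (t := t) (μ := μ)) hx
  have hx2 : (1:ℝ) ≤ x^2 := by nlinarith [_root_.sq_abs x]
  have hxnorm : ‖(x:ℂ)‖^2 = x^2 := by
    rw [Complex.norm_real, Real.norm_eq_abs, _root_.sq_abs]
  rw [hxnorm] at hb
  have hx0 : (0:ℝ) < x^2 := by linarith
  have hC : (0:ℝ) ≤ (2:ℝ)^(2*N+1) := by positivity
  set a := ‖2*Complex.I * QE2 N t m n (x:ℂ) / DD N t μ (x:ℂ)‖ with ha
  have ha0 : 0 ≤ a := norm_nonneg _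
  calc a * (1+x^2) ≤ (2^(2*N+1)/x^2) * (1+x^2) := by
        refine mul_le_mul_of_nonneg_right hb (by positivity)
    _ = 2^(2*N+1)/x^2 + 2^(2*N+1) := by rw [mul_add, mul_one, div_mul_cancel₀ _ hx0.ne']
    _ ≤ 2^(2*N+1) + 2^(2*N+1) := by
        have := div_le_self hC hx2
        linarith
    _ = 2*2^(2*N+1) := by ring

include ht hμ in
lemma integral_G_eq_zero (hN : 2 ≤ N) (m n : ℕ) (hm : m ∈ Finset.range N)
    (hn : n ∈ Finset.range N) (hmn : m ≠ n) :
    ∫ x : ℝ, 2*Complex.I * QE2 N t m n (x:ℂ) / DD N t μ (x:ℂ) = 0 := by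
  set G : ℂ → ℂ := fun z => 2*Complex.I * QE2 N t m n z / DD N t μ z with hG
  have hGint : Integrable (fun x : ℝ => G (x:ℂ)) (volume : Measure ℝ) :=
    integrable_G ht hμ hN m n hm hn hmn
  have htend1 : Filter.Tendsto (fun R : ℝ => ∫ x in (-R)..R, G (x:ℂ)) Filter.atTop
      (nhds (∫ x : ℝ, G (x:ℂ))) :=
    intervalIntegral_tendsto_integral hGint Filter.tendsto_neg_atTop_atBot Filter.tendsto_id
  have hkey : ∀ R : ℝ, Rbd N t μ ≤ R → ‖∫ x in (-R)..R, G (x:ℂ)‖ ≤ 4*2^(2*N+1)/R := by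
    intro R hR
    have hR1 : (1:ℝ) ≤ R := le_trans (Rbd_pos (N := N) (t := t) (μ := μ)) hR
    have hR0 : (0:ℝ) < R := by linarith
    -- the rectangle
    have Hdiff : DifferentiableOn ℂ G
        (Set.uIcc ((⟨-R, 0⟩ : ℂ)).re ((⟨R, R⟩ : ℂ)).re ×ℂ
          Set.uIcc ((⟨-R, 0⟩ : ℂ)).im ((⟨R, R⟩ : ℂ)).im) := by
      intro p hp
      have hpim : 0 ≤ p.im := by
        have h2 := (Complex.mem_reProdIm.mp hp).2
        simp only at h2
        rw [Set.uIcc_of_le (by linarith : (0:ℝ) ≤ R)] at h2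
        exact h2.1
      have hDp : DD N t μ p ≠ 0 := DD_ne ht hμ p hpim
      exact (((differentiable_const _).mul (diff_QE2 N t m n)).differentiableAt.div
        ((diff_DD N t μ).differentiableAt) hDp).differentiableWithinAt
    have hrect := Complex.integral_boundary_rect_eq_zero_of_differentiableOn G
      (⟨-R, 0⟩ : ℂ) (⟨R, R⟩ : ℂ) Hdiff
    simp only at hrect
    -- bounds on the three other sides
    have hCpos : (0:ℝ) ≤ (2:ℝ)^(2*N+1) := by positivity
    have htop : ‖∫ x : ℝ in (-R)..R, G ((x:ℝ) + (R:ℝ)*Complex.I)‖ ≤ 2^(2*N+1)/R^2 * (2*R) := by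
      have hb : ∀ x ∈ Set.uIoc (-R) R, ‖G ((x:ℝ) + (R:ℝ)*Complex.I)‖ ≤ 2^(2*N+1)/R^2 := by
        intro x hx
        have hzn : R ≤ ‖((x:ℝ) + (R:ℝ)*Complex.I : ℂ)‖ := by
          have him : ((x:ℝ) + (R:ℝ)*Complex.I : ℂ).im = R := by simp
          calc R = |((x:ℝ) + (R:ℝ)*Complex.I : ℂ).im| := by rw [him, abs_of_pos hR0]
            _ ≤ ‖((x:ℝ) + (R:ℝ)*Complex.I : ℂ)‖ := Complex.abs_im_le_norm _
            _ = ‖((x:ℝ) + (R:ℝ)*Complex.I : ℂ)‖ := rfl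
        have hz : Rbd N t μ ≤ ‖((x:ℝ) + (R:ℝ)*Complex.I : ℂ)‖ := le_trans hR hzn
        refine le_trans (norm_G_le (t := t) (μ := μ) hN m n hm hn hmn _ hz) ?_
        apply div_le_div_of_nonneg_left hCpos (by positivity)
        exact pow_le_pow_left₀ (by linarith) hzn 2
      have := intervalIntegral.norm_integral_le_of_norm_le_const hb
      calc ‖∫ x : ℝ in (-R)..R, G ((x:ℝ) + (R:ℝ)*Complex.I)‖
          ≤ 2^(2*N+1)/R^2 * |R - (-R)| := this
        _ = 2^(2*N+1)/R^2 * (2*R) := by rw [show R - (-R) = 2*R by ring, abs_of_pos (by linarith)]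
    have hside : ∀ c : ℝ, |c| = R → ‖∫ y : ℝ in (0:ℝ)..R, G ((c:ℝ) + (y:ℝ)*Complex.I)‖
        ≤ 2^(2*N+1)/R^2 * R := by
      intro c hc
      have hb : ∀ y ∈ Set.uIoc (0:ℝ) R, ‖G ((c:ℝ) + (y:ℝ)*Complex.I)‖ ≤ 2^(2*N+1)/R^2 := by
        intro y hy
        have hzn : R ≤ ‖((c:ℝ) + (y:ℝ)*Complex.I : ℂ)‖ := by
          have hre : ((c:ℝ) + (y:ℝ)*Complex.I : ℂ).re = c := by simp
          calc R = |((c:ℝ) + (y:ℝ)*Complex.I : ℂ).re| := by rw [hre, hc]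
            _ ≤ ‖((c:ℝ) + (y:ℝ)*Complex.I : ℂ)‖ := Complex.abs_re_le_norm _
            _ = ‖((c:ℝ) + (y:ℝ)*Complex.I : ℂ)‖ := rfl
        have hz : Rbd N t μ ≤ ‖((c:ℝ) + (y:ℝ)*Complex.I : ℂ)‖ := le_trans hR hzn
        refine le_trans (norm_G_le (t := t) (μ := μ) hN m n hm hn hmn _ hz) ?_
        apply div_le_div_of_nonneg_left hCpos (by positivity)
        exact pow_le_pow_left₀ (by linarith) hzn 2
      have := intervalIntegral.norm_integral_le_of_norm_le_const hb
      calc ‖∫ y : ℝ in (0:ℝ)..R, G ((c:ℝ) + (y:ℝ)*Complex.I)‖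
          ≤ 2^(2*N+1)/R^2 * |R - 0| := this
        _ = 2^(2*N+1)/R^2 * R := by rw [sub_zero, abs_of_pos hR0]
    simp only [Complex.ofReal_zero, zero_mul, add_zero, smul_eq_mul] at hrect
    have hb : ∫ x in (-R)..R, G (x:ℂ)
        = (∫ x : ℝ in (-R)..R, G ((x:ℝ) + (R:ℝ)*Complex.I))
          - Complex.I*(∫ y : ℝ in (0:ℝ)..R, G (((R:ℝ):ℂ) + (y:ℝ)*Complex.I))
          + Complex.I*(∫ y : ℝ in (0:ℝ)..R, G (((-R:ℝ):ℂ) + (y:ℝ)*Complex.I)) := by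
      linear_combination hrect
    rw [hb]
    have hnorm3 : ∀ X Y Z : ℂ, ‖X - Complex.I*Y + Complex.I*Z‖ ≤ ‖X‖ + ‖Y‖ + ‖Z‖ := by
      intro X Y Z
      have h1 : ‖X - Complex.I*Y + Complex.I*Z‖ ≤ ‖X - Complex.I*Y‖ + ‖Complex.I*Z‖ :=
        norm_add_le _ _
      have h2 : ‖X - Complex.I*Y‖ ≤ ‖X‖ + ‖Complex.I*Y‖ := norm_sub_le _ _
      rw [norm_mul, Complex.norm_I, one_mul] at h1 h2
      linarith
    have hs1 := hside R (abs_of_pos hR0)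
    have hs2 := hside (-R) (by rw [abs_neg, abs_of_pos hR0])
    have hsum : 2^(2*N+1)/R^2 * (2*R) + 2^(2*N+1)/R^2 * R + 2^(2*N+1)/R^2 * R
        = 4*2^(2*N+1)/R := by
      field_simp
      ring
    calc ‖_ - Complex.I*_ + Complex.I*_‖ ≤ _ + _ + _ := hnorm3 _ _ _
      _ ≤ 2^(2*N+1)/R^2 * (2*R) + 2^(2*N+1)/R^2 * R + 2^(2*N+1)/R^2 * R :=
          add_le_add (add_le_add htop hs1) hs2
      _ = 4*2^(2*N+1)/R := hsum
  have htend2 : Filter.Tendsto (fun R : ℝ => ∫ x in (-R)..R, G (x:ℂ)) Filter.atTop (nhds 0) := by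
    rw [tendsto_zero_iff_norm_tendsto_zero]
    apply squeeze_zero' (Filter.Eventually.of_forall (fun R => norm_nonneg _))
    · exact Filter.eventually_atTop.mpr ⟨Rbd N t μ, hkey⟩
    · exact Filter.Tendsto.div_atTop tendsto_const_nhds Filter.tendsto_id
  exact tendsto_nhds_unique htend1 htend2

end ClarkAux

open ClarkAux in
/-- With `S(x) = ∑_{n<N} μ n / (t n - x)` and `θ = (S - i)/(S + i)`, the boundary
reproducing kernels `k m (x) = (1 - θ(x))/(x - t m)` belong to `L²(ℝ)` and are pairwise
orthogonal there. -/
theorem clark_kernels_orthogonal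
    (N : ℕ) (hN : 1 ≤ N) (t : ℕ → ℝ) (ht : ∀ i j, i < j → j < N → t i < t j)
    (μ : ℕ → ℝ) (hμ : ∀ n < N, 0 < μ n)
    (S : ℝ → ℝ) (hS : ∀ x, S x = ∑ n ∈ Finset.range N, μ n / (t n - x))
    (θ : ℝ → ℂ) (hθ : ∀ x, θ x = ((S x : ℂ) - Complex.I) / ((S x : ℂ) + Complex.I))
    (k : ℕ → ℝ → ℂ) (hk : ∀ m x, k m x = (1 - θ x) / ((x : ℂ) - (t m : ℂ))) :
    (∀ m, m < N → MemLp (k m) 2 (volume : Measure ℝ)) ∧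
    (∀ m n, m < N → n < N → m ≠ n →
      ∫ x : ℝ, k m x * (starRingEnd ℂ) (k n x) = 0) := by
  have hbadnull : (volume : Measure ℝ) {x : ℝ | ¬ ∀ j ∈ Finset.range N, (t j:ℂ) ≠ (x:ℂ)} = 0 := by
    have hfin : (⋃ j ∈ (Finset.range N : Finset ℕ), ({t j} : Set ℝ)).Finite :=
      Set.Finite.biUnion (Finset.finite_toSet _) (fun _ _ => Set.finite_singleton _)
    refine measure_mono_null (fun x hx => ?_) (hfin.measure_zero _)
    simp only [Set.mem_setOf_eq] at hx
    push_neg at hx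
    obtain ⟨j, hj, hje⟩ := hx
    have hje' : t j = x := by exact_mod_cast hje
    exact Set.mem_biUnion hj (by simp [hje'])
  have hgood : ∀ᵐ x : ℝ ∂(volume : Measure ℝ), ∀ j ∈ Finset.range N, (t j:ℂ) ≠ (x:ℂ) :=
    MeasureTheory.ae_iff.mpr hbadnull
  have khm : ∀ m, m < N →
      k m =ᵐ[volume] fun x : ℝ => -2*Complex.I * QE N t m (x:ℂ) / DD N t μ (x:ℂ) := by
    intro m hm
    filter_upwards [hgood] with x hx
    have hs : ((S x : ℝ) : ℂ) * QQ N t (x:ℂ) = PP N t μ (x:ℂ) := by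
      rw [hS]
      exact S_mul_QQ (N := N) (t := t) (μ := μ) x hx
    rw [hk, hθ]
    exact k_formula (S x) m (Finset.mem_range.mpr hm) x hx hs
  constructor
  · intro m hm
    rw [memLp_congr_ae (khm m hm)]
    refine memLp_of_bound _ (cont_h ht hμ m) (Rbd N t μ) (2*(2^(2*N+1))^2) (fun x hx => ?_)
    have hz : Rbd N t μ ≤ ‖(x:ℂ)‖ := by rwa [Complex.norm_real, Real.norm_eq_abs]
    have hb := norm_h_le (t := t) (μ := μ) hN m (Finset.mem_range.mpr hm) (x:ℂ) hz
    have hx1 : (1:ℝ) ≤ |x| := le_trans (Rbd_pos (N := N) (t := t) (μ := μ)) hx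
    have hx2 : (1:ℝ) ≤ x^2 := by nlinarith [_root_.sq_abs x]
    have hx0 : x^2 ≠ 0 := by positivity
    have hxnorm : ‖(x:ℂ)‖ = |x| := by rw [Complex.norm_real, Real.norm_eq_abs]
    rw [hxnorm] at hb
    set a := ‖-2*Complex.I * QE N t m (x:ℂ) / DD N t μ (x:ℂ)‖ with ha
    have ha0 : 0 ≤ a := norm_nonneg _
    set C : ℝ := 2^(2*N+1) with hC
    have hC0 : (0:ℝ) ≤ C := by positivity
    have ha2 : a^2 ≤ C^2/x^2 := by
      calc a^2 ≤ (C/|x|)^2 := by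
            apply pow_le_pow_left₀ ha0 hb
        _ = C^2/x^2 := by rw [div_pow, _root_.sq_abs]
    have hd1 : C^2/x^2 ≤ C^2 := div_le_self (by positivity) hx2
    have hd2 : (C^2/x^2)*x^2 = C^2 := div_mul_cancel₀ _ hx0
    calc a^2 * (1+x^2) = a^2 + a^2*x^2 := by ring
      _ ≤ C^2/x^2 + (C^2/x^2)*x^2 := by
          refine add_le_add ha2 (mul_le_mul_of_nonneg_right ha2 (by positivity))
      _ = C^2/x^2 + C^2 := by rw [hd2]
      _ ≤ C^2 + C^2 := by linarith
      _ = 2*C^2 := by ring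
  · intro m n hm hn hmn
    have hN2 : 2 ≤ N := by omega
    have hmr : m ∈ Finset.range N := Finset.mem_range.mpr hm
    have hnr : n ∈ Finset.range N := Finset.mem_range.mpr hn
    have hGint := integrable_G ht hμ hN2 m n hmr hnr hmn
    have hG0 := integral_G_eq_zero ht hμ hN2 m n hmr hnr hmn
    have hGconj : Integrable
        (fun x : ℝ => (starRingEnd ℂ) (2*Complex.I * QE2 N t m n (x:ℂ) / DD N t μ (x:ℂ)))
        (volume : Measure ℝ) := by
      have h := ContinuousLinearMap.integrable_comp
        (Complex.conjCLE.toContinuousLinearMap) hGint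
      simpa [Complex.conjCLE_apply] using h
    have hae2 : (fun x : ℝ => k m x * (starRingEnd ℂ) (k n x)) =ᵐ[volume]
        fun x : ℝ => 2*Complex.I * QE2 N t m n (x:ℂ) / DD N t μ (x:ℂ)
          + (starRingEnd ℂ) (2*Complex.I * QE2 N t m n (x:ℂ) / DD N t μ (x:ℂ)) := by
      filter_upwards [khm m hm, khm n hn] with x h1 h2
      rw [h1, h2]
      exact kk_formula m n hmr hnr hmn x (DD_ne_real ht hμ x)
    rw [MeasureTheory.integral_congr_ae hae2, MeasureTheory.integral_add hGint hGconj,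
      integral_conj, hG0]
    simp
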